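/- Let n > 4, let k be a divisor of n with 1 < k and 2k ≤ n, set m = n/k, and let p be a prime. Then Sym(n) contains a quasi-semiregular element of order p in its action on the set of partitions of {1,…,n} into m parts of size k if and only if p is odd, k = p, and 2 ≤ m ≤ p. -/

import Mathlib

open Finset
open scoped Pointwise

def IsSizedPartition (n k : ℕ) (P : Finset (Finset (Fin n))) : Prop :=
  (∀ A ∈ P, A.card = k) ∧ ∀ a : Fin n, ∃! A : Finset (Fin n), A ∈ P ∧ a ∈ A

namespace QSR

variable {n k p : ℕ} {g : Equiv.Perm (Fin n)}

lemma image_eq_smul (g : Equiv.Perm (Fin n)) (P : Finset (Finset (Fin n))) :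
    P.image (fun A => A.image ⇑g) = g • P := by
  rw [Finset.smul_finset_def]
  apply Finset.image_congr
  intro A _
  show A.image ⇑g = g • A
  rw [Finset.smul_finset_def]; rfl

lemma part_smul (g : Equiv.Perm (Fin n)) (A : Finset (Fin n)) : g • A = A.image ⇑g := by
  rw [Finset.smul_finset_def]; rfl

lemma imgmap_inj (g : Equiv.Perm (Fin n)) :
    Function.Injective (fun C : Finset (Fin n) => C.image ⇑g) := by
  intro C D h
  have := congrArg (fun S : Finset (Fin n) => S.image ⇑g.symm) h
  simpa [Finset.image_image, Function.comp] using this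

lemma key_bez (hp : p.Prime) (hg : orderOf g = p) {S : Subgroup (Equiv.Perm (Fin n))}
    {d : ℤ} (hd : g ^ d ∈ S) (hnd : ¬ (p : ℤ) ∣ d) : g ∈ S := by
  have hq : Int.gcd d p ∣ p := by
    have := Int.gcd_dvd_right (a := d) (b := (p : ℤ))
    exact_mod_cast this
  rcases (Nat.Prime.eq_one_or_self_of_dvd hp _ hq) with h1 | h1
  · have hb := Int.gcd_eq_gcd_ab d (p : ℤ)
    rw [h1] at hb
    -- 1 = d * a + p * b
    have : g = (g ^ d) ^ Int.gcdA d p * (g ^ (p : ℤ)) ^ Int.gcdB d p := by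
      rw [← zpow_mul, ← zpow_mul, ← zpow_add, ← hb]
      simp
    have hgp : g ^ (p : ℤ) = 1 := by
      rw [zpow_natCast, ← hg, pow_orderOf_eq_one]
    rw [this, hgp, one_zpow, mul_one]
    exact S.zpow_mem hd _
  · exfalso; apply hnd
    have := Int.gcd_dvd_left (a := d) (b := (p : ℤ))
    rw [h1] at this; exact_mod_cast this

lemma fix_zpow (hp : p.Prime) (hg : orderOf g = p) {x : Fin n} (hx : g x ≠ x)
    {i : ℤ} (hfix : (g ^ i) x = x) : (p : ℤ) ∣ i := by
  by_contra hnd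
  have hd : g ^ i ∈ MulAction.stabilizer (Equiv.Perm (Fin n)) x := by
    simpa [MulAction.mem_stabilizer_iff, Equiv.Perm.smul_def] using hfix
  have := key_bez hp hg hd hnd
  simp [MulAction.mem_stabilizer_iff, Equiv.Perm.smul_def] at this
  exact hx this

lemma nonfixed_apply {x : Fin n} (hx : g x ≠ x) (i : ℕ) : g ((g ^ i) x) ≠ (g ^ i) x := by
  intro h
  apply hx
  have hc : g ((g ^ i) x) = (g ^ i) (g x) := by
    have : g * g ^ i = g ^ i * g := (Commute.self_pow g i).eq
    calc g ((g ^ i) x) = (g * g ^ i) x := rfl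
    _ = (g ^ i * g) x := by rw [this]
    _ = (g ^ i) (g x) := rfl
  rw [hc] at h
  exact (g ^ i).injective h

lemma fix_pow (hp : p.Prime) (hg : orderOf g = p) {x : Fin n} (hx : g x ≠ x)
    {i : ℕ} (hfix : (g ^ i) x = x) : p ∣ i := by
  have : (g ^ (i : ℤ)) x = x := by rw [zpow_natCast]; exact hfix
  exact_mod_cast fix_zpow hp hg hx this

lemma pow_apply_inj (hp : p.Prime) (hg : orderOf g = p) {x : Fin n} (hx : g x ≠ x)
    {i j : ℕ} (hi : i < p) (hj : j < p) (h : (g ^ i) x = (g ^ j) x) : i = j := by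
  rcases le_total i j with hle | hle
  · -- g^(j-i) fixes g^i x
    have hy : (g ^ (j - i)) ((g ^ i) x) = (g ^ i) x := by
      rw [← Equiv.Perm.mul_apply, ← pow_add]
      rw [Nat.sub_add_cancel hle]
      exact h.symm
    have hyx : g ((g ^ i) x) ≠ (g ^ i) x := nonfixed_apply hx i
    have := Nat.eq_zero_of_dvd_of_lt (fix_pow hp hg hyx hy) (by omega)
    omega
  · have hy : (g ^ (i - j)) ((g ^ j) x) = (g ^ j) x := by
      rw [← Equiv.Perm.mul_apply, ← pow_add]
      rw [Nat.sub_add_cancel hle]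
      exact h
    have hyx : g ((g ^ j) x) ≠ (g ^ j) x := nonfixed_apply hx j
    have hz : j - i < p ∨ i - j = 0 := by omega
    have := Nat.eq_zero_of_dvd_of_lt (fix_pow hp hg hyx hy) (by omega)
    omega

/-- the orbit of `x` under `⟨g⟩` where `g` has order `p` -/
def orbp (g : Equiv.Perm (Fin n)) (p : ℕ) (x : Fin n) : Finset (Fin n) :=
  (Finset.range p).image fun i => (g ^ i) x

lemma mem_orbp_iff {x y : Fin n} : y ∈ orbp g p x ↔ ∃ i < p, (g ^ i) x = y := by
  simp [orbp]

lemma self_mem_orbp (hp : 0 < p) (x : Fin n) : x ∈ orbp g p x :=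
  mem_orbp_iff.2 ⟨0, hp, by simp⟩

lemma orbp_of_fixed {x : Fin n} (hx : g x = x) : orbp g p x ⊆ {x} := by
  intro y hy
  rcases mem_orbp_iff.1 hy with ⟨i, _, rfl⟩
  exact Finset.mem_singleton.2 (Function.IsFixedPt.perm_pow hx i)

lemma orbp_nonfixed_mem {x y : Fin n} (hx : g x ≠ x) (hy : y ∈ orbp g p x) : g y ≠ y := by
  rcases mem_orbp_iff.1 hy with ⟨i, _, rfl⟩
  exact nonfixed_apply hx i

lemma orbp_card (hp : p.Prime) (hg : orderOf g = p) {x : Fin n} (hx : g x ≠ x) :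
    (orbp g p x).card = p := by
  rw [orbp, Finset.card_image_of_injOn, Finset.card_range]
  intro i hi j hj h
  exact pow_apply_inj hp hg hx (Finset.mem_range.1 hi) (Finset.mem_range.1 hj) h

lemma pow_mem_orbp (hp : 0 < p) (hg : orderOf g = p) (x : Fin n) (i : ℕ) :
    (g ^ i) x ∈ orbp g p x := by
  refine mem_orbp_iff.2 ⟨i % p, Nat.mod_lt _ hp, ?_⟩
  rw [← hg, pow_mod_orderOf]

lemma orbp_image (hp : 0 < p) (hg : orderOf g = p) (x : Fin n) :
    (orbp g p x).image ⇑g = orbp g p x := by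
  apply Finset.eq_of_subset_of_card_le
  · intro y hy
    simp only [Finset.mem_image] at hy
    rcases hy with ⟨z, hz, rfl⟩
    rcases mem_orbp_iff.1 hz with ⟨i, _, rfl⟩
    have : g ((g ^ i) x) = (g ^ (i + 1)) x := by
      rw [pow_succ', Equiv.Perm.mul_apply]
    rw [this]
    exact pow_mem_orbp hp hg x (i + 1)
  · rw [Finset.card_image_of_injective _ g.injective]

lemma orbp_eq_of_mem (hp : p.Prime) (hg : orderOf g = p) {x y : Fin n}
    (hy : y ∈ orbp g p x) : orbp g p y = orbp g p x := by
  by_cases hx : g x = x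
  · have := orbp_of_fixed (p := p) hx hy
    simp only [Finset.mem_singleton] at this
    rw [this]
  · have hsub : orbp g p y ⊆ orbp g p x := by
      intro z hz
      rcases mem_orbp_iff.1 hz with ⟨j, _, rfl⟩
      rcases mem_orbp_iff.1 hy with ⟨i, _, rfl⟩
      rw [← Equiv.Perm.mul_apply, ← pow_add]
      exact pow_mem_orbp hp.pos hg x (j + i)
    have hyn : g y ≠ y := orbp_nonfixed_mem hx hy
    apply Finset.eq_of_subset_of_card_le hsub
    rw [orbp_card hp hg hx, orbp_card hp hg hyn]

lemma orbp_disj (hp : p.Prime) (hg : orderOf g = p) {x y z : Fin n}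
    (hzx : z ∈ orbp g p x) (hzy : z ∈ orbp g p y) : orbp g p x = orbp g p y := by
  rw [← orbp_eq_of_mem hp hg hzx, ← orbp_eq_of_mem hp hg hzy]

/-- an invariant part contains full orbits -/
lemma orbp_subset_of_invariant {A : Finset (Fin n)} (hA : A.image ⇑g = A)
    {x : Fin n} (hx : x ∈ A) : orbp g p x ⊆ A := by
  have key : ∀ i : ℕ, (g ^ i) x ∈ A := by
    intro i
    induction i with
    | zero => simpa using hx
    | succ i ih =>
      have : (g ^ (i + 1)) x = g ((g ^ i) x) := by rw [pow_succ', Equiv.Perm.mul_apply]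
      rw [this, ← hA]
      exact Finset.mem_image_of_mem _ ih
  intro y hy
  rcases mem_orbp_iff.1 hy with ⟨i, _, rfl⟩
  exact key i

variable {P : Finset (Finset (Fin n))} {A B : Finset (Fin n)}

lemma part_eq (hP : IsSizedPartition n k P) (hA : A ∈ P) (hB : B ∈ P) {a : Fin n}
    (haA : a ∈ A) (haB : a ∈ B) : A = B := by
  obtain ⟨C, _, hC⟩ := hP.2 a
  rw [hC A ⟨hA, haA⟩, hC B ⟨hB, haB⟩]

lemma sp_card (hP : IsSizedPartition n k P) : P.card * k = n := by
  have hu : P.biUnion id = Finset.univ := by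
    apply Finset.eq_univ_iff_forall.2
    intro a
    obtain ⟨C, ⟨hC, haC⟩, _⟩ := hP.2 a
    exact Finset.mem_biUnion.2 ⟨C, hC, haC⟩
  have hd : ∀ A ∈ P, ∀ B ∈ P, A ≠ B → Disjoint (id A) (id B) := by
    intro A hA B hB hne
    rw [Finset.disjoint_left]
    intro a haA haB
    exact hne (part_eq hP hA hB haA haB)
  have := Finset.card_biUnion hd
  rw [hu, Finset.card_univ, Fintype.card_fin] at this
  simp only [id] at this
  rw [Finset.sum_congr rfl (fun A hA => (hP.1 A hA : A.card = k)), Finset.sum_const,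
    smul_eq_mul] at this
  omega

lemma glue (hP : IsSizedPartition n k P) {D D' : Finset (Finset (Fin n))} (hD : D ⊆ P)
    (h1 : ∀ A ∈ D', A.card = k)
    (h2 : ∀ a : Fin n, (∃ A ∈ D, a ∈ A) → ∃! A, A ∈ D' ∧ a ∈ A)
    (h3 : ∀ A ∈ D', ∀ a ∈ A, ∃ B ∈ D, a ∈ B) :
    IsSizedPartition n k ((P \ D) ∪ D') := by
  constructor
  · intro A hA
    rcases Finset.mem_union.1 hA with h | h
    · exact hP.1 A (Finset.mem_sdiff.1 h).1
    · exact h1 A h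
  · intro a
    by_cases ha : ∃ A ∈ D, a ∈ A
    · obtain ⟨A, ⟨hAD', haA⟩, huni⟩ := h2 a ha
      refine ⟨A, ⟨Finset.mem_union_right _ hAD', haA⟩, ?_⟩
      rintro A' ⟨hA', haA'⟩
      rcases Finset.mem_union.1 hA' with h | h
      · exfalso
        obtain ⟨A₀, hA₀, haA₀⟩ := ha
        have := part_eq hP (Finset.mem_sdiff.1 h).1 (hD hA₀) haA' haA₀
        exact (Finset.mem_sdiff.1 h).2 (this ▸ hA₀)
      · exact huni A' ⟨h, haA'⟩
    · obtain ⟨B, ⟨hBP, haB⟩, huniB⟩ := hP.2 a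
      have hBD : B ∉ D := fun h => ha ⟨B, h, haB⟩
      refine ⟨B, ⟨Finset.mem_union_left _ (Finset.mem_sdiff.2 ⟨hBP, hBD⟩), haB⟩, ?_⟩
      rintro A' ⟨hA', haA'⟩
      rcases Finset.mem_union.1 hA' with h | h
      · exact huniB A' ⟨(Finset.mem_sdiff.1 h).1, haA'⟩
      · exact absurd (h3 A' h a haA') ha

lemma inv_of_forall_mem (h : ∀ C ∈ P, C.image ⇑g ∈ P) :
    P.image (fun C => C.image ⇑g) = P := by
  apply Finset.eq_of_subset_of_card_le
  · intro C hC
    rcases Finset.mem_image.1 hC with ⟨B, hB, rfl⟩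
    exact h B hB
  · rw [Finset.card_image_of_injective _ (imgmap_inj g)]

lemma part_mem_of_inv (hPg : P.image (fun C => C.image ⇑g) = P) (hA : A ∈ P) :
    A.image ⇑g ∈ P := by
  rw [← hPg]
  exact Finset.mem_image_of_mem _ hA

lemma zpow_smul_part_mem (hPg : P.image (fun C => C.image ⇑g) = P) (hA : A ∈ P) (i : ℤ) :
    g ^ i • A ∈ P := by
  have hst : g ∈ MulAction.stabilizer (Equiv.Perm (Fin n)) P := by
    rw [MulAction.mem_stabilizer_iff, ← image_eq_smul, hPg]
  have hst' : g ^ i • P = P := (MulAction.stabilizer (Equiv.Perm (Fin n)) P).zpow_mem hst i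
  rw [← hst']
  exact Finset.smul_mem_smul_finset hA

lemma moved_no_fix (hP : IsSizedPartition n k P) (hPg : P.image (fun C => C.image ⇑g) = P)
    (hA : A ∈ P) (hmv : A.image ⇑g ≠ A) {x : Fin n} (hx : x ∈ A) : g x ≠ x := by
  intro h
  have h1 : A.image ⇑g ∈ P := part_mem_of_inv hPg hA
  have h2 : x ∈ A.image ⇑g := by
    rw [← h]; exact Finset.mem_image_of_mem _ hx
  exact hmv (part_eq hP h1 hA h2 hx)

lemma moved_transversal (hp : p.Prime) (hg : orderOf g = p)
    (hP : IsSizedPartition n k P) (hPg : P.image (fun C => C.image ⇑g) = P)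
    (hA : A ∈ P) (hmv : A.image ⇑g ≠ A) {x y : Fin n} (hx : x ∈ A) (hy : y ∈ A)
    (hyx : y ∈ orbp g p x) : y = x := by
  rcases mem_orbp_iff.1 hyx with ⟨i, hi, rfl⟩
  by_cases hi0 : i = 0
  · simp [hi0]
  · exfalso
    have hBm : g ^ (i : ℤ) • A ∈ P := zpow_smul_part_mem hPg hA i
    have hmem : (g ^ i) x ∈ g ^ (i : ℤ) • A := by
      rw [zpow_natCast]
      exact Finset.smul_mem_smul_finset hx
    have heq : A = g ^ (i : ℤ) • A := part_eq hP hA hBm hy hmem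
    have hst : g ^ (i : ℤ) ∈ MulAction.stabilizer (Equiv.Perm (Fin n)) A := by
      rw [MulAction.mem_stabilizer_iff, ← heq]
    have hnd : ¬ (p : ℤ) ∣ (i : ℤ) := by
      intro h
      have : p ∣ i := by exact_mod_cast h
      have := Nat.eq_zero_of_dvd_of_lt this hi
      exact hi0 this
    have := key_bez hp hg hst hnd
    rw [MulAction.mem_stabilizer_iff] at this
    rw [part_smul] at this
    exact hmv this

lemma disj_parts (hP : IsSizedPartition n k P) (hA : A ∈ P) (hB : B ∈ P) (hne : A ≠ B) :
    Disjoint A B := by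
  rw [Finset.disjoint_left]
  intro a haA haB
  exact hne (part_eq hP hA hB haA haB)

lemma swap_construction (hP : IsSizedPartition n k P)
    (hall : ∀ C ∈ P, C.image ⇑g = C)
    (hA : A ∈ P) (hB : B ∈ P) (hne : A ≠ B)
    {S T : Finset (Fin n)} (hS : S ⊆ A) (hSpr : S ≠ A)
    (hT : T ⊆ B) (hcard : S.card = T.card) (hTne : T.Nonempty)
    (hSinv : S.image ⇑g = S) (hTinv : T.image ⇑g = T) :
    ∃ P', IsSizedPartition n k P' ∧ P'.image (fun C => C.image ⇑g) = P' ∧ P' ≠ P := by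
  classical
  have hdAB : Disjoint A B := disj_parts hP hA hB hne
  set A' : Finset (Fin n) := (A \ S) ∪ T with hA'def
  set B' : Finset (Fin n) := (B \ T) ∪ S with hB'def
  have hTA : Disjoint T (A \ S) := (hdAB.symm.mono hT (Finset.sdiff_subset)).symm.symm
  have hSB : Disjoint S (B \ T) := (hdAB.mono hS (Finset.sdiff_subset)).symm.symm
  have hST : Disjoint S T := hdAB.mono hS hT
  have hcA : A.card = k := hP.1 A hA
  have hcB : B.card = k := hP.1 B hB
  have hSk : S.card ≤ k := hcA ▸ Finset.card_le_card hS
  have hTk : T.card ≤ k := hcB ▸ Finset.card_le_card hT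
  have hcA' : A'.card = k := by
    rw [hA'def, Finset.card_union_of_disjoint (hTA.symm), Finset.card_sdiff_of_subset hS]
    omega
  have hcB' : B'.card = k := by
    rw [hB'def, Finset.card_union_of_disjoint (hSB.symm), Finset.card_sdiff_of_subset hT]
    omega
  have hmemA' : ∀ a : Fin n, a ∈ A' ↔ (a ∈ A ∧ a ∉ S) ∨ a ∈ T := by
    intro a; simp [hA'def, Finset.mem_union, Finset.mem_sdiff]
  have hmemB' : ∀ a : Fin n, a ∈ B' ↔ (a ∈ B ∧ a ∉ T) ∨ a ∈ S := by
    intro a; simp [hB'def, Finset.mem_union, Finset.mem_sdiff]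
  have hAB : ∀ a : Fin n, a ∈ A → a ∉ B := fun a ha hb => Finset.disjoint_left.1 hdAB ha hb
  refine ⟨(P \ ({A, B} : Finset (Finset (Fin n)))) ∪ ({A', B'} : Finset (Finset (Fin n))), ?_, ?_, ?_⟩
  · apply glue hP
    · intro C hC
      rcases Finset.mem_insert.1 hC with rfl | hC
      · exact hA
      · rw [Finset.mem_singleton.1 hC]; exact hB
    · intro C hC
      rcases Finset.mem_insert.1 hC with rfl | hC
      · exact hcA'
      · rw [Finset.mem_singleton.1 hC]; exact hcB'
    · intro a ha
      have haAB : a ∈ A ∨ a ∈ B := by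
        rcases ha with ⟨C, hC, haC⟩
        rcases Finset.mem_insert.1 hC with rfl | hC
        · exact Or.inl haC
        · rw [Finset.mem_singleton.1 hC] at haC; exact Or.inr haC
      have hex : (a ∈ A' ∧ a ∉ B') ∨ (a ∈ B' ∧ a ∉ A') := by
        rcases haAB with haA | haB
        · by_cases haS : a ∈ S
          · right
            constructor
            · exact (hmemB' a).2 (Or.inr haS)
            · rw [hmemA' a]
              push_neg
              exact ⟨fun _ => haS, fun h => hAB a haA (hT h)⟩
          · left
            constructor
            · exact (hmemA' a).2 (Or.inl ⟨haA, haS⟩)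
            · rw [hmemB' a]
              push_neg
              exact ⟨fun h => absurd haA (fun _ => hAB a haA h), haS⟩
        · by_cases haT : a ∈ T
          · left
            constructor
            · exact (hmemA' a).2 (Or.inr haT)
            · rw [hmemB' a]
              push_neg
              exact ⟨fun _ => haT, fun h => hAB a (hS h) haB⟩
          · right
            constructor
            · exact (hmemB' a).2 (Or.inl ⟨haB, haT⟩)
            · rw [hmemA' a]
              push_neg
              exact ⟨fun h => (hAB a h haB).elim, fun h => haT h⟩
      rcases hex with ⟨h1, h2⟩ | ⟨h1, h2⟩
      · refine ⟨A', ⟨Finset.mem_insert_self _ _, h1⟩, ?_⟩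
        rintro C ⟨hC, haC⟩
        rcases Finset.mem_insert.1 hC with rfl | hC
        · rfl
        · rw [Finset.mem_singleton.1 hC] at haC ⊢
          exact absurd haC h2
      · refine ⟨B', ⟨Finset.mem_insert_of_mem (Finset.mem_singleton_self _), h1⟩, ?_⟩
        rintro C ⟨hC, haC⟩
        rcases Finset.mem_insert.1 hC with rfl | hC
        · exact absurd haC h2
        · exact Finset.mem_singleton.1 hC
    · intro C hC a haC
      rcases Finset.mem_insert.1 hC with rfl | hC
      · rcases (hmemA' a).1 haC with ⟨h, _⟩ | h
        · exact ⟨A, Finset.mem_insert_self _ _, h⟩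
        · exact ⟨B, Finset.mem_insert_of_mem (Finset.mem_singleton_self _), hT h⟩
      · rw [Finset.mem_singleton.1 hC] at haC
        rcases (hmemB' a).1 haC with ⟨h, _⟩ | h
        · exact ⟨B, Finset.mem_insert_of_mem (Finset.mem_singleton_self _), h⟩
        · exact ⟨A, Finset.mem_insert_self _ _, hS h⟩
  · apply inv_of_forall_mem
    intro C hC
    rcases Finset.mem_union.1 hC with hC | hC
    · have hCP := (Finset.mem_sdiff.1 hC).1
      rw [hall C hCP]
      exact Finset.mem_union_left _ hC
    · have himg : C.image ⇑g = C := by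
        rcases Finset.mem_insert.1 hC with rfl | hC
        · rw [hA'def, Finset.image_union, Finset.image_sdiff _ _ g.injective,
            hall A hA, hSinv, hTinv]
        · rw [Finset.mem_singleton.1 hC]
          rw [hB'def, Finset.image_union, Finset.image_sdiff _ _ g.injective,
            hall B hB, hSinv, hTinv]
      rw [himg]
      exact Finset.mem_union_right _ hC
  · intro hcontra
    obtain ⟨t₀, ht₀⟩ := hTne
    have hA'P' : A' ∈ (P \ ({A, B} : Finset (Finset (Fin n)))) ∪ ({A', B'} : Finset (Finset (Fin n))) :=
      Finset.mem_union_right _ (Finset.mem_insert_self _ _)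
    rw [hcontra] at hA'P'
    have ht₀A' : t₀ ∈ A' := (hmemA' t₀).2 (Or.inr ht₀)
    have : A' = B := part_eq hP hA'P' hB ht₀A' (hT ht₀)
    have hsub : A \ S ⊆ A' := Finset.subset_union_left
    have : A \ S = ∅ := by
      rw [Finset.eq_empty_iff_forall_notMem]
      intro a haAS
      have h1 : a ∈ B := this ▸ hsub haAS
      exact hAB a (Finset.mem_sdiff.1 haAS).1 h1
    apply hSpr
    apply Finset.Subset.antisymm hS
    intro a haA
    by_contra haS
    rw [Finset.eq_empty_iff_forall_notMem] at this
    exact this a (Finset.mem_sdiff.2 ⟨haA, haS⟩)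

lemma zpow_eq_nat (hp0 : 0 < p) (hg : orderOf g = p) (i : ℤ) :
    ∃ j : ℕ, j < p ∧ g ^ i = g ^ (j : ℕ) := by
  have h1 : 0 ≤ i % (p : ℤ) := Int.emod_nonneg _ (by exact_mod_cast hp0.ne')
  have h2 : i % (p : ℤ) < p := Int.emod_lt_of_pos _ (by exact_mod_cast hp0)
  refine ⟨(i % (p : ℤ)).toNat, by omega, ?_⟩
  rw [← zpow_natCast, Int.toNat_of_nonneg h1, ← hg, zpow_mod_orderOf]

lemma zpow_eq_of_dvd (hg : orderOf g = p) {i j : ℤ} (h : (p : ℤ) ∣ i - j) :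
    g ^ i = g ^ j := by
  obtain ⟨t, ht⟩ := h
  have hij : i = j + (p : ℤ) * t := by omega
  have hgp : g ^ ((p : ℤ) * t) = 1 := by
    rw [zpow_mul, zpow_natCast, ← hg, pow_orderOf_eq_one, one_zpow]
  rw [hij, zpow_add, hgp, mul_one]

lemma mem_perm_smul {a : Fin n} {h : Equiv.Perm (Fin n)} {C : Finset (Fin n)} :
    a ∈ h • C ↔ ∃ b ∈ C, h b = a := by
  rw [part_smul]
  simp [Finset.mem_image]

lemma shift_construction (hp : p.Prime) (hg : orderOf g = p) (hk : 1 < k)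
    (hP : IsSizedPartition n k P) (hPg : P.image (fun C => C.image ⇑g) = P)
    (hA : A ∈ P) (hmv : A.image ⇑g ≠ A) :
    ∃ P', IsSizedPartition n k P' ∧ P'.image (fun C => C.image ⇑g) = P' ∧ P' ≠ P := by
  classical
  have hnofix : ∀ z ∈ A, g z ≠ z := fun z hz => moved_no_fix hP hPg hA hmv hz
  have htrans : ∀ z ∈ A, ∀ w ∈ A, w ∈ orbp g p z → w = z :=
    fun z hz w hw hwz => moved_transversal hp hg hP hPg hA hmv hz hw hwz
  have hcA : A.card = k := hP.1 A hA
  obtain ⟨x, hxA, y, hyA, hxy⟩ := Finset.one_lt_card.1 (by omega : 1 < A.card)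
  have hgx_orb : g x ∈ orbp g p x := by
    have h1 : g x = (g ^ 1) x := by simp
    rw [h1]; exact pow_mem_orbp hp.pos hg x 1
  have hgxA : g x ∉ A := by
    intro h
    exact hnofix x hxA (htrans x hxA (g x) h hgx_orb)
  set A' : Finset (Fin n) := insert (g x) (A.erase x) with hA'def
  have hgxe : g x ∉ A.erase x := fun h => hgxA (Finset.mem_of_mem_erase h)
  have hxA' : x ∉ A' := by
    rw [hA'def, Finset.mem_insert]
    push_neg
    exact ⟨fun h => hnofix x hxA h.symm, fun h => (Finset.mem_erase.1 h).1 rfl⟩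
  have hcA' : A'.card = k := by
    rw [hA'def, Finset.card_insert_of_notMem hgxe, Finset.card_erase_of_mem hxA]
    omega
  have horbA' : ∀ b ∈ A', ∃ b₀ ∈ A, orbp g p b = orbp g p b₀ ∧ ((b₀ = x ∧ b = g x) ∨ b₀ = b) := by
    intro b hb
    rcases Finset.mem_insert.1 hb with rfl | hb
    · exact ⟨x, hxA, orbp_eq_of_mem hp hg hgx_orb, Or.inl ⟨rfl, rfl⟩⟩
    · exact ⟨b, Finset.mem_of_mem_erase hb, rfl, Or.inr rfl⟩
  have hnofix' : ∀ b ∈ A', g b ≠ b := by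
    intro b hb
    rcases Finset.mem_insert.1 hb with rfl | hb
    · exact orbp_nonfixed_mem (hnofix x hxA) hgx_orb
    · exact hnofix b (Finset.mem_of_mem_erase hb)
  have htrans' : ∀ b ∈ A', ∀ c ∈ A', c ∈ orbp g p b → c = b := by
    intro b hb c hc hcb
    obtain ⟨b₀, hb₀A, hb₀e, hb₀x⟩ := horbA' b hb
    obtain ⟨c₀, hc₀A, hc₀e, hc₀x⟩ := horbA' c hc
    have horb : orbp g p c = orbp g p b := orbp_eq_of_mem hp hg hcb
    have hc₀b : c₀ ∈ orbp g p b₀ := by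
      rw [← hb₀e, ← horb, hc₀e]
      exact self_mem_orbp hp.pos c₀
    have hbc0 : c₀ = b₀ := htrans b₀ hb₀A c₀ hc₀A hc₀b
    rcases hb₀x with ⟨hbx, hbgx⟩ | hbb
    · rcases hc₀x with ⟨hcx, hcgx⟩ | hcc
      · rw [hcgx, hbgx]
      · exfalso
        rw [← hcc, hbc0, hbx] at hc
        exact hxA' hc
    · rcases hc₀x with ⟨hcx, hcgx⟩ | hcc
      · exfalso
        rw [hbc0] at hcx
        rw [← hbb, hcx] at hb
        exact hxA' hb
      · rw [← hcc, hbc0, hbb]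
  set OP : Finset (Finset (Fin n)) := (Finset.range p).image (fun j : ℕ => (g ^ j) • A) with hOPdef
  set NP : Finset (Finset (Fin n)) := (Finset.range p).image (fun j : ℕ => (g ^ j) • A') with hNPdef
  have hcomp : ∀ (i : ℤ) (z : Fin n), (g ^ i) (g z) = (g ^ (i + 1)) z := by
    intro i z
    rw [← Equiv.Perm.mul_apply, ← zpow_add_one]
  have hzmem : ∀ (C : Finset (Fin n)) (i : ℤ),
      g ^ i • C ∈ (Finset.range p).image (fun j : ℕ => (g ^ j) • C) := by
    intro C i
    obtain ⟨j, hj, hje⟩ := zpow_eq_nat hp.pos hg i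
    rw [hje]
    exact Finset.mem_image.2 ⟨j, Finset.mem_range.2 hj, rfl⟩
  have hOPz : ∀ i : ℤ, g ^ i • A ∈ OP := fun i => hzmem A i
  have hNPz : ∀ i : ℤ, g ^ i • A' ∈ NP := fun i => hzmem A' i
  have hOPmem : ∀ C ∈ OP, ∃ i : ℤ, C = g ^ i • A := by
    intro C hC
    obtain ⟨j, _, rfl⟩ := Finset.mem_image.1 hC
    exact ⟨(j : ℤ), by rw [zpow_natCast]⟩
  have hNPmem : ∀ C ∈ NP, ∃ i : ℤ, C = g ^ i • A' := by
    intro C hC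
    obtain ⟨j, _, rfl⟩ := Finset.mem_image.1 hC
    exact ⟨(j : ℤ), by rw [zpow_natCast]⟩
  -- uniqueness of NP-parts containing a point
  have huniqNP : ∀ (a : Fin n) (i j : ℤ), a ∈ g ^ i • A' → a ∈ g ^ j • A' →
      g ^ i • A' = g ^ j • A' := by
    intro a i j hai haj
    obtain ⟨b, hb, hba⟩ := mem_perm_smul.1 hai
    obtain ⟨c, hc, hca⟩ := mem_perm_smul.1 haj
    have hcb : c = (g ^ (i - j)) b := by
      have : (g ^ j) c = (g ^ i) b := by rw [hba, hca]
      have h2 := congrArg (⇑(g ^ (-j : ℤ))) this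
      rw [← Equiv.Perm.mul_apply, ← Equiv.Perm.mul_apply, ← zpow_add, ← zpow_add] at h2
      simpa [add_comm, sub_eq_add_neg] using h2
    obtain ⟨s, hs, hse⟩ := zpow_eq_nat hp.pos hg (i - j)
    have hcorb : c ∈ orbp g p b := by
      rw [hcb, hse]
      exact mem_orbp_iff.2 ⟨s, hs, rfl⟩
    have hcbe : c = b := htrans' b hb c hc hcorb
    have hfix : (g ^ (i - j)) b = b := by rw [← hcb, hcbe]
    have hdvd : (p : ℤ) ∣ i - j := fix_zpow hp hg (hnofix' b hb) hfix
    rw [zpow_eq_of_dvd hg hdvd]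
  refine ⟨(P \ OP) ∪ NP, ?_, ?_, ?_⟩
  · apply glue hP
    · intro C hC
      obtain ⟨i, rfl⟩ := hOPmem C hC
      exact zpow_smul_part_mem hPg hA i
    · intro C hC
      obtain ⟨i, rfl⟩ := hNPmem C hC
      rw [Finset.card_smul_finset]
      exact hcA'
    · intro a ha
      obtain ⟨C, hCOP, haC⟩ := ha
      obtain ⟨i, rfl⟩ := hOPmem C hCOP
      obtain ⟨b, hbA, hba⟩ := mem_perm_smul.1 haC
      have hex : ∃ j : ℤ, a ∈ g ^ j • A' := by
        by_cases hbx : b = x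
        · refine ⟨i - 1, ?_⟩
          refine mem_perm_smul.2 ⟨g x, Finset.mem_insert_self _ _, ?_⟩
          rw [hcomp, sub_add_cancel, ← hbx, hba]
        · refine ⟨i, ?_⟩
          exact mem_perm_smul.2 ⟨b, Finset.mem_insert_of_mem (Finset.mem_erase.2 ⟨hbx, hbA⟩), hba⟩
      obtain ⟨j, haj⟩ := hex
      refine ⟨g ^ j • A', ⟨hNPz j, haj⟩, ?_⟩
      rintro C' ⟨hC', haC'⟩
      obtain ⟨j', rfl⟩ := hNPmem C' hC'
      exact huniqNP a j' j haC' haj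
    · intro C hC a haC
      obtain ⟨i, rfl⟩ := hNPmem C hC
      obtain ⟨b, hbA', hba⟩ := mem_perm_smul.1 haC
      rcases Finset.mem_insert.1 hbA' with hbgx | hbe
      · refine ⟨g ^ (i + 1) • A, hOPz _, mem_perm_smul.2 ⟨x, hxA, ?_⟩⟩
        rw [← hcomp, ← hbgx, hba]
      · exact ⟨g ^ i • A, hOPz i, mem_perm_smul.2 ⟨b, Finset.mem_of_mem_erase hbe, hba⟩⟩
  · apply inv_of_forall_mem
    intro C hC
    have himg : C.image ⇑g = g ^ (1 : ℤ) • C := by rw [part_smul, zpow_one]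
    rcases Finset.mem_union.1 hC with hC | hC
    · have h1 : C.image ⇑g ∈ P := part_mem_of_inv hPg (Finset.mem_sdiff.1 hC).1
      apply Finset.mem_union_left
      rw [Finset.mem_sdiff]
      refine ⟨h1, ?_⟩
      intro hmem
      obtain ⟨i, heq⟩ := hOPmem _ hmem
      rw [himg] at heq
      have hCeq : C = g ^ (i - 1) • A := by
        have h2 : g ^ (-1 : ℤ) • (g ^ (1 : ℤ) • C) = g ^ (-1 : ℤ) • (g ^ i • A) := by rw [heq]
        rw [smul_smul, smul_smul, ← zpow_add, ← zpow_add] at h2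
        simpa [sub_eq_add_neg, add_comm] using h2
      exact (Finset.mem_sdiff.1 hC).2 (hCeq ▸ hOPz (i - 1))
    · obtain ⟨i, rfl⟩ := hNPmem C hC
      apply Finset.mem_union_right
      rw [himg, smul_smul, ← zpow_add]
      exact hNPz _
  · intro heq
    have hA'NP : A' ∈ NP := by
      have := hNPz 0
      rwa [zpow_zero, one_smul] at this
    have hA'P : A' ∈ P := by
      rw [← heq]
      exact Finset.mem_union_right _ hA'NP
    have hgA : g ^ (1 : ℤ) • A ∈ P := zpow_smul_part_mem hPg hA 1
    have hgxgA : g x ∈ g ^ (1 : ℤ) • A := mem_perm_smul.2 ⟨x, hxA, by rw [zpow_one]⟩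
    have heq1 : A' = g ^ (1 : ℤ) • A :=
      part_eq hP hA'P hgA (Finset.mem_insert_self _ _) hgxgA
    have hyA' : y ∈ A' := Finset.mem_insert_of_mem (Finset.mem_erase.2 ⟨hxy.symm, hyA⟩)
    rw [heq1] at hyA'
    have : A = g ^ (1 : ℤ) • A := part_eq hP hA hgA hyA hyA'
    apply hmv
    rw [part_smul, zpow_one] at this
    exact this.symm

lemma diag_construction (hp : p.Prime) (hg : orderOf g = p)
    (hP : IsSizedPartition n p P)
    (hall : ∀ C ∈ P, C.image ⇑g = C)
    {E : Finset (Finset (Fin n))} (hE : E ⊆ P) (hEcard : E.card = p)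
    (hEx : ∀ A ∈ E, ∃ x, x ∈ A ∧ g x ≠ x ∧ A = orbp g p x) :
    ∃ P', IsSizedPartition n p P' ∧ P'.image (fun C => C.image ⇑g) = P' ∧ P' ≠ P := by
  classical
  haveI : NeZero p := ⟨hp.pos.ne'⟩
  haveI : Fact (1 < p) := ⟨hp.one_lt⟩
  have hcards : Fintype.card (ZMod p) = Fintype.card {A // A ∈ E} := by
    rw [ZMod.card, Fintype.card_coe, hEcard]
  let eE : ZMod p ≃ {A // A ∈ E} := Fintype.equivOfCardEq hcards
  set O : ZMod p → Finset (Fin n) := fun i => (eE i : Finset (Fin n)) with hOdef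
  have hOinj : Function.Injective O := by
    intro i j h
    apply eE.injective
    exact Subtype.ext h
  have hOE : ∀ i, O i ∈ E := fun i => (eE i).2
  have hOsurj : ∀ A ∈ E, ∃ i, O i = A := by
    intro A hA
    exact ⟨eE.symm ⟨A, hA⟩, by simp [hOdef]⟩
  have hX : ∀ i : ZMod p, ∃ x, x ∈ O i ∧ g x ≠ x ∧ O i = orbp g p x :=
    fun i => hEx (O i) (hOE i)
  choose x hx1 hx2 hx3 using hX
  have horbdisj : ∀ {i j : ZMod p} {z : Fin n}, z ∈ O i → z ∈ O j → i = j := by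
    intro i j z hzi hzj
    rw [hx3 i] at hzi
    rw [hx3 j] at hzj
    apply hOinj
    rw [hx3 i, hx3 j]
    exact orbp_disj hp hg hzi hzj
  set B : ZMod p → Finset (Fin n) :=
    fun j => Finset.image (fun i : ZMod p => (g ^ (i + j).val) (x i)) Finset.univ with hBdef
  have hbelt : ∀ i j : ZMod p, (g ^ (i + j).val) (x i) ∈ O i := by
    intro i j
    rw [hx3 i]
    exact pow_mem_orbp hp.pos hg (x i) _
  have hbeq : ∀ {i i' j j' : ZMod p},
      (g ^ (i + j).val) (x i) = (g ^ (i' + j').val) (x i') → i = i' ∧ j = j' := by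
    intro i i' j j' h
    have hii : i = i' := by
      apply horbdisj (hbelt i j)
      rw [h]
      exact hbelt i' j'
    subst hii
    have hvv : (i + j).val = (i + j').val :=
      pow_apply_inj hp hg (hx2 i) (ZMod.val_lt _) (ZMod.val_lt _) h
    have : i + j = i + j' := ZMod.val_injective p hvv
    exact ⟨rfl, by simpa using this⟩
  have hBcard : ∀ j, (B j).card = p := by
    intro j
    rw [hBdef]
    rw [Finset.card_image_of_injOn, Finset.card_univ, ZMod.card]
    intro i _ i' _ h
    exact (hbeq h).1
  have hBmem : ∀ {a : Fin n} {j : ZMod p}, a ∈ B j ↔ ∃ i, (g ^ (i + j).val) (x i) = a := by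
    intro a j
    simp [hBdef]
  -- image of B j under g is B (j+1)
  have hBimg : ∀ j : ZMod p, (B j).image ⇑g = B (j + 1) := by
    intro j
    have hptwise : ∀ i : ZMod p, g ((g ^ (i + j).val) (x i)) = (g ^ (i + (j + 1)).val) (x i) := by
      intro i
      rw [← Equiv.Perm.mul_apply, ← pow_succ']
      congr 1
      apply (pow_eq_pow_iff_modEq).2
      rw [hg]
      have h1 : (i + (j + 1)) = (i + j) + 1 := by ring
      have h2 : (i + (j + 1)).val = ((i + j).val + 1) % p := by
        rw [h1, ZMod.val_add (i + j) 1, ZMod.val_one]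
      rw [h2]
      exact (Nat.mod_modEq _ p).symm
    rw [hBdef, Finset.image_image]
    apply Finset.image_congr
    intro i _
    exact hptwise i
  set D' : Finset (Finset (Fin n)) := Finset.image B Finset.univ with hD'def
  have hBD' : ∀ j, B j ∈ D' := fun j => Finset.mem_image.2 ⟨j, Finset.mem_univ _, rfl⟩
  have hD'mem : ∀ C ∈ D', ∃ j, C = B j := by
    intro C hC
    obtain ⟨j, _, rfl⟩ := Finset.mem_image.1 hC
    exact ⟨j, rfl⟩
  refine ⟨(P \ E) ∪ D', ?_, ?_, ?_⟩
  · apply glue hP hE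
    · intro C hC
      obtain ⟨j, rfl⟩ := hD'mem C hC
      exact hBcard j
    · intro a ha
      obtain ⟨A, hAE, haA⟩ := ha
      obtain ⟨i₀, rfl⟩ := hOsurj A hAE
      rw [hx3 i₀] at haA
      obtain ⟨s, hs, hsa⟩ := mem_orbp_iff.1 haA
      set j : ZMod p := (s : ZMod p) - i₀ with hjdef
      have hval : (i₀ + j).val = s := by
        rw [hjdef]
        have : i₀ + ((s : ZMod p) - i₀) = (s : ZMod p) := by ring
        rw [this, ZMod.val_cast_of_lt hs]
      have haBj : a ∈ B j := hBmem.2 ⟨i₀, by rw [hval, hsa]⟩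
      refine ⟨B j, ⟨hBD' j, haBj⟩, ?_⟩
      rintro C ⟨hC, haC⟩
      obtain ⟨j', rfl⟩ := hD'mem C hC
      obtain ⟨i', hi'⟩ := hBmem.1 haC
      have h1 : (g ^ (i' + j').val) (x i') = (g ^ (i₀ + j).val) (x i₀) := by
        rw [hi', hval, hsa]
      obtain ⟨-, rfl⟩ := hbeq h1
      rfl
    · intro C hC a haC
      obtain ⟨j, rfl⟩ := hD'mem C hC
      obtain ⟨i, hi⟩ := hBmem.1 haC
      exact ⟨O i, hOE i, hi ▸ hbelt i j⟩
  · apply inv_of_forall_mem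
    intro C hC
    rcases Finset.mem_union.1 hC with hC | hC
    · have hCP := (Finset.mem_sdiff.1 hC).1
      rw [hall C hCP]
      exact Finset.mem_union_left _ hC
    · obtain ⟨j, rfl⟩ := hD'mem C hC
      rw [hBimg j]
      exact Finset.mem_union_right _ (hBD' (j + 1))
  · intro heq
    have hB0P : B 0 ∈ P := by
      rw [← heq]
      exact Finset.mem_union_right _ (hBD' 0)
    have hx0B : x 0 ∈ B 0 := by
      apply hBmem.2 ⟨0, ?_⟩
      norm_num
    have hO0P : O 0 ∈ P := hE (hOE 0)
    have hBO : B 0 = O 0 := part_eq hP hB0P hO0P hx0B (hx1 0)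
    have h1B : (g ^ ((1 : ZMod p) + 0).val) (x 1) ∈ B 0 := hBmem.2 ⟨1, rfl⟩
    rw [hBO] at h1B
    have h1O : (g ^ ((1 : ZMod p) + 0).val) (x 1) ∈ O 1 := hbelt 1 0
    have : (1 : ZMod p) = 0 := horbdisj h1O h1B
    exact one_ne_zero this

lemma forward_dir {m : ℕ} (hn : 4 < n) (hk1 : 1 < k) (hk2 : 2 * k ≤ n) (hkn : k ∣ n)
    (hm : m = n / k) (hp : p.Prime) (hg : orderOf g = p)
    {Q : Finset (Finset (Fin n))} (hQ : IsSizedPartition n k Q)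
    (huniq : ∀ P : Finset (Finset (Fin n)), IsSizedPartition n k P →
      (P.image (fun A => A.image ⇑g) = P ↔ P = Q)) :
    Odd p ∧ k = p ∧ 2 ≤ m ∧ m ≤ p := by
  classical
  have hk0 : 0 < k := by omega
  have hQcard : Q.card * k = n := sp_card hQ
  have hmQ : m = Q.card :=
    hm.trans (Nat.div_eq_of_eq_mul_left hk0 hQcard.symm)
  have hm2 : 2 ≤ m := by
    rw [hmQ]
    have h2 : 2 * k ≤ Q.card * k := by rw [hQcard]; exact hk2
    exact Nat.le_of_mul_le_mul_right h2 hk0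
  have hQg : Q.image (fun A => A.image ⇑g) = Q := (huniq Q hQ).2 rfl
  have hall : ∀ C ∈ Q, C.image ⇑g = C := by
    intro C hC
    by_contra hmv
    obtain ⟨P', hP's, hP'inv, hP'ne⟩ := shift_construction hp hg hk1 hQ hQg hC hmv
    exact hP'ne (((huniq P' hP's).1 hP'inv) ▸ rfl)
  have hg1 : g ≠ 1 := by
    intro h
    rw [h, orderOf_one] at hg
    exact hp.ne_one hg.symm
  have hx : ∃ x : Fin n, g x ≠ x := by
    by_contra h
    push_neg at h
    exact hg1 (Equiv.ext fun z => h z)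
  obtain ⟨x, hxnf⟩ := hx
  obtain ⟨A₀, ⟨hA₀Q, hxA₀⟩, -⟩ := hQ.2 x
  have horbsub : orbp g p x ⊆ A₀ := orbp_subset_of_invariant (hall A₀ hA₀Q) hxA₀
  have hpk : p ≤ k := by
    have := Finset.card_le_card horbsub
    rw [orbp_card hp hg hxnf, hQ.1 A₀ hA₀Q] at this
    exact this
  -- k = p
  have hkp : k = p := by
    by_contra hne
    have hplt : p < k := by omega
    have hQ2 : 1 < Q.card := by
      rw [← hmQ]; exact hm2
    obtain ⟨B, hBQ, hBne⟩ := Finset.exists_mem_ne hQ2 A₀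
    have hcB : B.card = k := hQ.1 B hBQ
    have hSsub : orbp g p x ⊆ A₀ := horbsub
    have hSpr : orbp g p x ≠ A₀ := by
      intro h
      have := hQ.1 A₀ hA₀Q
      rw [← h, orbp_card hp hg hxnf] at this
      omega
    have hSinv : (orbp g p x).image ⇑g = orbp g p x := orbp_image hp.pos hg x
    by_cases hyB : ∃ y ∈ B, g y ≠ y
    · obtain ⟨y, hyBmem, hynf⟩ := hyB
      have hTsub : orbp g p y ⊆ B := orbp_subset_of_invariant (hall B hBQ) hyBmem
      obtain ⟨P', hP's, hP'inv, hP'ne⟩ := swap_construction hQ hall hA₀Q hBQ hBne.symm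
        hSsub hSpr hTsub
        (by rw [orbp_card hp hg hxnf, orbp_card hp hg hynf])
        ⟨y, self_mem_orbp hp.pos y⟩ hSinv (orbp_image hp.pos hg y)
      exact hP'ne ((huniq P' hP's).1 hP'inv)
    · push_neg at hyB
      obtain ⟨T, hTsub, hTcard⟩ := Finset.exists_subset_card_eq (by omega : p ≤ B.card)
      have hTne : T.Nonempty := by
        rw [← Finset.card_pos, hTcard]
        exact hp.pos
      have hTinv : T.image ⇑g = T := by
        have : ∀ t ∈ T, g t = t := fun t ht => hyB t (hTsub ht)
        calc T.image ⇑g = T.image id := Finset.image_congr (fun t ht => this t ht)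
        _ = T := Finset.image_id
      obtain ⟨P', hP's, hP'inv, hP'ne⟩ := swap_construction hQ hall hA₀Q hBQ hBne.symm
        hSsub hSpr hTsub (by rw [orbp_card hp hg hxnf, hTcard]) hTne hSinv hTinv
      exact hP'ne ((huniq P' hP's).1 hP'inv)
  subst hkp
  -- classification of parts
  have hkind : ∀ C ∈ Q, (∃ z, z ∈ C ∧ g z ≠ z ∧ C = orbp g k z) ∨ (∀ z ∈ C, g z = z) := by
    intro C hC
    by_cases h : ∃ z ∈ C, g z ≠ z
    · obtain ⟨z, hzC, hznf⟩ := h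
      left
      refine ⟨z, hzC, hznf, ?_⟩
      have hsub : orbp g k z ⊆ C := orbp_subset_of_invariant (hall C hC) hzC
      have := Finset.card_le_card hsub
      apply (Finset.eq_of_subset_of_card_le hsub ?_).symm
      rw [orbp_card hp hg hznf, hQ.1 C hC]
    · push_neg at h
      exact Or.inr h
  -- at most one all-fixed part
  have hfix1 : (Q.filter (fun C => ∀ z ∈ C, g z = z)).card ≤ 1 := by
    rw [Finset.card_le_one]
    intro B1 hB1 B2 hB2
    by_contra hne12
    rw [Finset.mem_filter] at hB1 hB2
    obtain ⟨b1, hb1⟩ := Finset.card_pos.1 (by rw [hQ.1 B1 hB1.1]; exact hp.pos)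
    obtain ⟨b2, hb2⟩ := Finset.card_pos.1 (by rw [hQ.1 B2 hB2.1]; exact hp.pos)
    have hSpr : ({b1} : Finset (Fin n)) ≠ B1 := by
      intro h
      have := hQ.1 B1 hB1.1
      rw [← h, Finset.card_singleton] at this
      have := hp.one_lt
      omega
    obtain ⟨P', hP's, hP'inv, hP'ne⟩ := swap_construction hQ hall hB1.1 hB2.1 hne12
      (Finset.singleton_subset_iff.2 hb1) hSpr (Finset.singleton_subset_iff.2 hb2)
      (by simp) ⟨b2, Finset.mem_singleton_self _⟩
      (by simp [hB1.2 b1 hb1]) (by simp [hB2.2 b2 hb2])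
    exact hP'ne ((huniq P' hP's).1 hP'inv)
  -- at most p-1 orbit parts
  have horb1 : (Q.filter (fun C => ∃ z ∈ C, g z ≠ z)).card ≤ k - 1 := by
    by_contra hge
    push_neg at hge
    have hge' : k ≤ (Q.filter (fun C => ∃ z ∈ C, g z ≠ z)).card := by omega
    obtain ⟨E, hEsub, hEcard⟩ :=
      Finset.exists_subset_card_eq hge'
    have hEQ : E ⊆ Q := hEsub.trans (Finset.filter_subset _ _)
    have hEx : ∀ A ∈ E, ∃ z, z ∈ A ∧ g z ≠ z ∧ A = orbp g k z := by
      intro A hA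
      have hAf := Finset.mem_filter.1 (hEsub hA)
      rcases hkind A hAf.1 with h | h
      · exact h
      · obtain ⟨z, hz, hnz⟩ := hAf.2
        exact absurd (h z hz) hnz
    obtain ⟨P', hP's, hP'inv, hP'ne⟩ := diag_construction hp hg hQ hall hEQ hEcard hEx
    exact hP'ne ((huniq P' hP's).1 hP'inv)
  have hsplit := Finset.card_filter_add_card_filter_not
    (s := Q) (p := fun C => ∀ z ∈ C, g z = z)
  push_neg at hsplit
  have hmp : m ≤ k := by
    have hkpos := hp.pos
    omega
  have hodd : Odd k := by
    rcases hp.eq_two_or_odd' with h2 | hodd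
    · exfalso
      rw [h2] at hmp hQcard
      omega
    · exact hodd
  exact ⟨hodd, rfl, hm2, hmp⟩

lemma backward_dir {m : ℕ} (hn : 4 < n) (hm2 : 2 ≤ m) (hmp : m ≤ p) (hp : p.Prime)
    (hnpm : n = p * m) :
    ∃ g : Equiv.Perm (Fin n), orderOf g = p ∧
      ∃ Q : Finset (Finset (Fin n)), IsSizedPartition n p Q ∧
        Q.image (fun A => A.image ⇑g) = Q ∧
        (∀ P : Finset (Finset (Fin n)), IsSizedPartition n p P →
          P.image (fun A => A.image ⇑g) = P → P = Q) := by
  classical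
  haveI : NeZero p := ⟨hp.pos.ne'⟩
  haveI : Fact p.Prime := ⟨hp⟩
  haveI : Fact (1 < p) := ⟨hp.one_lt⟩
  haveI : NeZero m := ⟨by omega⟩
  have hcards : Fintype.card (Fin n) = Fintype.card (Fin m × ZMod p) := by
    simp [ZMod.card, hnpm, Nat.mul_comm]
  let e : Fin n ≃ Fin m × ZMod p := Fintype.equivOfCardEq hcards
  set δ : Fin m → ZMod p := fun i => if i = 0 then 0 else 1 with hδdef
  set g₀ : Equiv.Perm (Fin m × ZMod p) :=
    Equiv.prodShear (Equiv.refl (Fin m)) (fun i => Equiv.addRight (δ i)) with hg₀def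
  have hg₀app : ∀ (a : Fin m) (c : ZMod p), g₀ (a, c) = (a, c + δ a) := by
    intro a c
    simp [hg₀def, Equiv.prodShear]
  set g : Equiv.Perm (Fin n) := (e.trans g₀).trans e.symm with hgdef
  have happ : ∀ x : Fin n, g x = e.symm (g₀ (e x)) := fun x => rfl
  have hg₀pow : ∀ (i : ℕ) (a : Fin m) (c : ZMod p), (g₀ ^ i) (a, c) = (a, c + i * δ a) := by
    intro i
    induction i with
    | zero => intro a c; simp
    | succ i ih =>
      intro a c
      have h1 : (g₀ ^ (i + 1)) (a, c) = g₀ ((g₀ ^ i) (a, c)) := by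
        rw [pow_succ', Equiv.Perm.mul_apply]
      rw [h1, ih, hg₀app]
      congr 1
      push_cast
      ring
  have hgpow : ∀ (i : ℕ) (x : Fin n), (g ^ i) x = e.symm ((g₀ ^ i) (e x)) := by
    intro i
    induction i with
    | zero => intro x; simp
    | succ i ih =>
      intro x
      have h1 : (g ^ (i + 1)) x = g ((g ^ i) x) := by
        rw [pow_succ', Equiv.Perm.mul_apply]
      rw [h1, ih, happ, Equiv.apply_symm_apply]
      have h2 : (g₀ ^ (i + 1)) (e x) = g₀ ((g₀ ^ i) (e x)) := by
        rw [pow_succ', Equiv.Perm.mul_apply]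
      rw [h2]
  have hδ0 : ∀ a : Fin m, δ a = 0 ↔ a = 0 := by
    intro a
    rw [hδdef]
    by_cases h : a = 0 <;> simp [h]
  have hfix_iff : ∀ x : Fin n, g x = x ↔ (e x).1 = 0 := by
    intro x
    rw [happ]
    constructor
    · intro h
      have h1 : g₀ (e x) = e x := by
        have := congrArg e h
        rwa [Equiv.apply_symm_apply] at this
      have h2 : ((e x).1, (e x).2 + δ (e x).1) = ((e x).1, (e x).2) := by
        rw [← hg₀app, Prod.mk.eta, h1]
      have h3 : (e x).2 + δ (e x).1 = (e x).2 := congrArg Prod.snd h2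
      have h4 : δ (e x).1 = 0 := by
        have h5 : (e x).2 + δ (e x).1 = (e x).2 + 0 := by rw [h3, add_zero]
        exact add_left_cancel h5
      exact (hδ0 _).1 h4
    · intro h
      have h1 : g₀ (e x) = e x := by
        rw [← Prod.mk.eta (p := e x), hg₀app, (hδ0 _).2 h, add_zero]
      rw [h1, Equiv.symm_apply_apply]
  -- fixed-point set
  set F : Finset (Fin n) := Finset.image (fun j : ZMod p => e.symm ((0 : Fin m), j)) Finset.univ
    with hFdef
  have hFmem : ∀ x : Fin n, x ∈ F ↔ (e x).1 = 0 := by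
    intro x
    rw [hFdef]
    simp only [Finset.mem_image, Finset.mem_univ, true_and]
    constructor
    · rintro ⟨j, rfl⟩
      rw [Equiv.apply_symm_apply]
    · intro h
      refine ⟨(e x).2, ?_⟩
      rw [← h, Prod.mk.eta, Equiv.symm_apply_apply]
  have hFcard : F.card = p := by
    rw [hFdef, Finset.card_image_of_injective, Finset.card_univ, ZMod.card]
    intro a b hab
    have := congrArg e hab
    rw [Equiv.apply_symm_apply, Equiv.apply_symm_apply] at this
    exact (Prod.ext_iff.1 this).2
  have hFfix : ∀ x ∈ F, g x = x := fun x hx => (hfix_iff x).2 ((hFmem x).1 hx)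
  -- order of g
  have hgp1 : g ^ p = 1 := by
    apply Equiv.ext
    intro x
    rw [hgpow]
    have h1 : (g₀ ^ p) (e x) = e x := by
      rw [← Prod.mk.eta (p := e x), hg₀pow]
      simp [ZMod.natCast_self]
    rw [h1, Equiv.symm_apply_apply, Equiv.Perm.one_apply]
  have hxy1 : ∃ x : Fin n, g x ≠ x := by
    refine ⟨e.symm ((⟨1, by omega⟩ : Fin m), 0), ?_⟩
    intro h
    have h2 := (hfix_iff _).1 h
    rw [Equiv.apply_symm_apply] at h2
    have h3 : (1 : ℕ) = 0 := congrArg Fin.val h2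
    omega
  have hg1 : g ≠ 1 := by
    obtain ⟨x, hx⟩ := hxy1
    intro h
    rw [h] at hx
    exact hx rfl
  have hord : orderOf g = p := orderOf_eq_prime hgp1 hg1
  -- block structure of orbits
  have horb_block : ∀ (x y : Fin n), y ∈ orbp g p x → (e y).1 = (e x).1 := by
    intro x y hy
    rcases mem_orbp_iff.1 hy with ⟨i, _, rfl⟩
    rw [hgpow]
    rw [← Prod.mk.eta (p := e x), hg₀pow, Equiv.apply_symm_apply]
  have hsameblock : ∀ (x y : Fin n), g x ≠ x → (e y).1 = (e x).1 → y ∈ orbp g p x := by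
    intro x y hx hb
    have ha0 : (e x).1 ≠ 0 := fun h => hx ((hfix_iff x).2 h)
    have hδ1 : δ (e x).1 = 1 := by
      rw [hδdef]
      simp [ha0]
    set i : ℕ := ((e y).2 - (e x).2).val with hidef
    refine mem_orbp_iff.2 ⟨i, ZMod.val_lt _, ?_⟩
    rw [hgpow, ← Prod.mk.eta (p := e x), hg₀pow, hδ1, mul_one]
    have hcast : ((i : ℕ) : ZMod p) = (e y).2 - (e x).2 := by
      rw [hidef]
      exact ZMod.natCast_rightInverse _
    rw [hcast]
    have h2 : (e x).2 + ((e y).2 - (e x).2) = (e y).2 := by ring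
    rw [h2, ← hb, Prod.mk.eta, Equiv.symm_apply_apply]
  -- the canonical partition
  set Q : Finset (Finset (Fin n)) :=
    insert F ((Finset.univ.filter (fun x : Fin n => g x ≠ x)).image (fun x => orbp g p x))
    with hQdef
  have hQmem : ∀ C ∈ Q, C = F ∨ ∃ x, g x ≠ x ∧ C = orbp g p x := by
    intro C hC
    rcases Finset.mem_insert.1 hC with h | h
    · exact Or.inl h
    · obtain ⟨x, hx, rfl⟩ := Finset.mem_image.1 h
      exact Or.inr ⟨x, (Finset.mem_filter.1 hx).2, rfl⟩
  have horbQ : ∀ x : Fin n, g x ≠ x → orbp g p x ∈ Q := by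
    intro x hx
    apply Finset.mem_insert_of_mem
    exact Finset.mem_image.2 ⟨x, Finset.mem_filter.2 ⟨Finset.mem_univ _, hx⟩, rfl⟩
  have hFQ : F ∈ Q := Finset.mem_insert_self _ _
  have hQs : IsSizedPartition n p Q := by
    constructor
    · intro C hC
      rcases hQmem C hC with rfl | ⟨x, hx, rfl⟩
      · exact hFcard
      · exact orbp_card hp hord hx
    · intro a
      by_cases ha : g a = a
      · refine ⟨F, ⟨hFQ, (hFmem a).2 ((hfix_iff a).1 ha)⟩, ?_⟩
        rintro C ⟨hC, haC⟩
        rcases hQmem C hC with rfl | ⟨x, hx, rfl⟩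
        · rfl
        · exact absurd ha (orbp_nonfixed_mem hx haC)
      · refine ⟨orbp g p a, ⟨horbQ a ha, self_mem_orbp hp.pos a⟩, ?_⟩
        rintro C ⟨hC, haC⟩
        rcases hQmem C hC with rfl | ⟨x, hx, rfl⟩
        · exact absurd (hFfix a haC) ha
        · exact (orbp_eq_of_mem hp hord haC).symm
  have hQinv : Q.image (fun A => A.image ⇑g) = Q := by
    apply inv_of_forall_mem
    intro C hC
    rcases hQmem C hC with rfl | ⟨x, hx, rfl⟩
    · have : F.image ⇑g = F := by
        calc F.image ⇑g = F.image id := Finset.image_congr (fun t ht => hFfix t ht)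
        _ = F := Finset.image_id
      rw [this]; exact hFQ
    · rw [orbp_image hp.pos hord]
      exact horbQ x hx
  refine ⟨g, hord, Q, hQs, hQinv, ?_⟩
  -- uniqueness
  intro P hP hPg
  -- step 1: no moved parts
  have hall : ∀ A ∈ P, A.image ⇑g = A := by
    intro A hA
    by_contra hmv
    have hnofixA : ∀ z ∈ A, g z ≠ z := fun z hz => moved_no_fix hP hPg hA hmv hz
    have htransA : ∀ z ∈ A, ∀ w ∈ A, w ∈ orbp g p z → w = z :=
      fun z hz w hw hwz => moved_transversal hp hord hP hPg hA hmv hz hw hwz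
    -- A embeds into Fin m \ {0} via block index
    have hinj : Set.InjOn (fun a : Fin n => (e a).1) A := by
      intro a ha b hb hab
      exact (htransA a ha b hb (hsameblock a b (hnofixA a ha) hab.symm)).symm
    have hsub : ∀ a ∈ A, (e a).1 ∈ Finset.univ.erase (0 : Fin m) := by
      intro a ha
      refine Finset.mem_erase.2 ⟨?_, Finset.mem_univ _⟩
      intro h
      exact hnofixA a ha ((hfix_iff a).2 h)
    have hcard := Finset.card_le_card_of_injOn _ hsub hinj
    rw [hP.1 A hA, Finset.card_erase_of_mem (Finset.mem_univ _), Finset.card_univ,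
      Fintype.card_fin] at hcard
    omega
  -- step 2: each part of P is in Q and conversely
  have hPQ : ∀ A ∈ P, A ∈ Q := by
    intro A hA
    by_cases h : ∃ z ∈ A, g z ≠ z
    · obtain ⟨z, hzA, hznf⟩ := h
      have hsub : orbp g p z ⊆ A := orbp_subset_of_invariant (hall A hA) hzA
      have heq : orbp g p z = A := by
        apply Finset.eq_of_subset_of_card_le hsub
        rw [orbp_card hp hord hznf, hP.1 A hA]
      rw [← heq]
      exact horbQ z hznf
    · push_neg at h
      have hsub : A ⊆ F := by
        intro a ha
        exact (hFmem a).2 ((hfix_iff a).1 (h a ha))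
      have heq : A = F := by
        apply Finset.eq_of_subset_of_card_le hsub
        rw [hFcard, hP.1 A hA]
      rw [heq]; exact hFQ
  have hQP : ∀ A ∈ Q, A ∈ P := by
    intro A hA
    rcases hQmem A hA with rfl | ⟨x, hx, rfl⟩
    · -- F is a part of P
      set x₀ : Fin n := e.symm ((0 : Fin m), (0 : ZMod p)) with hx₀def
      have hx₀F : x₀ ∈ F := by
        rw [hFmem, hx₀def, Equiv.apply_symm_apply]
      have hx₀fix : g x₀ = x₀ := hFfix x₀ hx₀F
      obtain ⟨B, ⟨hBP, hx₀B⟩, -⟩ := hP.2 x₀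
      have hBF : B = F := by
        by_cases h : ∃ z ∈ B, g z ≠ z
        · exfalso
          obtain ⟨z, hzB, hznf⟩ := h
          have hsub : orbp g p z ⊆ B := orbp_subset_of_invariant (hall B hBP) hzB
          have heq : orbp g p z = B := by
            apply Finset.eq_of_subset_of_card_le hsub
            rw [orbp_card hp hord hznf, hP.1 B hBP]
          rw [← heq] at hx₀B
          exact orbp_nonfixed_mem hznf hx₀B hx₀fix
        · push_neg at h
          apply Finset.eq_of_subset_of_card_le
          · intro a ha
            exact (hFmem a).2 ((hfix_iff a).1 (h a ha))
          · rw [hFcard, hP.1 B hBP]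
      rw [← hBF]; exact hBP
    · obtain ⟨B, ⟨hBP, hxB⟩, -⟩ := hP.2 x
      have hsub : orbp g p x ⊆ B := orbp_subset_of_invariant (hall B hBP) hxB
      have heq : orbp g p x = B := by
        apply Finset.eq_of_subset_of_card_le hsub
        rw [orbp_card hp hord hx, hP.1 B hBP]
      rw [heq]; exact hBP
  apply Finset.Subset.antisymm
  · intro A hA; exact hPQ A hA
  · intro A hA; exact hQP A hA

end QSR

theorem stmt16 {n k m : ℕ} (hn : 4 < n) (hk1 : 1 < k) (hk2 : 2 * k ≤ n)
    (hkn : k ∣ n) (hm : m = n / k) {p : ℕ} (hp : p.Prime) :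
    (∃ g : Equiv.Perm (Fin n), orderOf g = p ∧
      ∃ Q : Finset (Finset (Fin n)), IsSizedPartition n k Q ∧
        (∀ P : Finset (Finset (Fin n)), IsSizedPartition n k P →
          (P.image (fun A => A.image ⇑g) = P ↔ P = Q)) ∧
        (∀ (j : ℤ) (P : Finset (Finset (Fin n))), IsSizedPartition n k P → P ≠ Q →
          P.image (fun A => A.image ⇑(g ^ j)) = P →
          ∀ R : Finset (Finset (Fin n)), IsSizedPartition n k R →
            R.image (fun A => A.image ⇑(g ^ j)) = R)) ↔
      (Odd p ∧ k = p ∧ 2 ≤ m ∧ m ≤ p) := by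
  constructor
  · rintro ⟨g, hord, Q, hQs, huniq, -⟩
    exact QSR.forward_dir hn hk1 hk2 hkn hm hp hord hQs huniq
  · rintro ⟨hodd, hkp, hm2, hmp⟩
    subst hkp
    have hnpm : n = k * m := by
      rw [hm]
      exact (Nat.mul_div_cancel' hkn).symm
    obtain ⟨g, hord, Q, hQs, hQinv, huni⟩ := QSR.backward_dir hn hm2 hmp hp hnpm
    refine ⟨g, hord, Q, hQs, ?_, ?_⟩
    · intro P hPs
      exact ⟨fun h => huni P hPs h, fun h => h ▸ hQinv⟩
    · intro j P hPs hPne hPinv R hRs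
      by_cases hpj : (k : ℤ) ∣ j
      · have hgj : g ^ j = 1 := by
          apply (orderOf_dvd_iff_zpow_eq_one).1
          rw [hord]
          exact hpj
        rw [hgj]
        simp
      · exfalso
        have hst : g ^ j ∈ MulAction.stabilizer (Equiv.Perm (Fin n)) P := by
          rw [MulAction.mem_stabilizer_iff, ← QSR.image_eq_smul, hPinv]
        have hg' := QSR.key_bez hp hord hst hpj
        rw [MulAction.mem_stabilizer_iff, ← QSR.image_eq_smul] at hg'
        exact hPne (huni P hPs hg')
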